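/- If G=(U,W,E) is a P_7-free bipartite graph, then its bipartite complement is also a P_7-free bipartite graph. -/

import Mathlib

universe u

/-- `X` is complete to `Y` in `G`: every vertex of `X` is adjacent to every vertex of `Y`. -/
def CompleteTo {V : Type u} (G : SimpleGraph V) (X Y : Set V) : Prop :=
  ∀ ⦃x⦄, x ∈ X → ∀ ⦃y⦄, y ∈ Y → G.Adj x y

/-- `X` is anticomplete to `Y` in `G`. -/
def AnticompleteTo {V : Type u} (G : SimpleGraph V) (X Y : Set V) : Prop :=
  ∀ ⦃x⦄, x ∈ X → ∀ ⦃y⦄, y ∈ Y → ¬ G.Adj x y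

/-- `(U, W)` is a bipartition of the vertex set of `G` into two independent sets. -/
structure IsBipartition {V : Type u} (G : SimpleGraph V) (U W : Set V) : Prop where
  union_eq : U ∪ W = Set.univ
  disjoint : Disjoint U W
  cross : ∀ ⦃x y⦄, G.Adj x y → (x ∈ U ∧ y ∈ W) ∨ (x ∈ W ∧ y ∈ U)

/-- `G` contains an induced subgraph isomorphic to `H`. -/
def HasInducedCopy {α : Type*} {V : Type u} (H : SimpleGraph α) (G : SimpleGraph V) : Prop :=
  ∃ f : α ↪ V, ∀ a b : α, G.Adj (f a) (f b) ↔ H.Adj a b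

/-- `G` has no induced subgraph isomorphic to the chordless path `P_m` on `m` vertices. -/
def PathFree (m : ℕ) {V : Type u} (G : SimpleGraph V) : Prop :=
  ¬ HasInducedCopy (SimpleGraph.pathGraph m) G

/-- `G` is bipartite: its vertex set can be partitioned into (at most) two independent sets. -/
def Bipartite {V : Type u} (G : SimpleGraph V) : Prop :=
  ∃ U W : Set V, IsBipartition G U W

/-- The bipartite complement of `G` with respect to the parts `U` and `W`:
`u ∈ U` and `w ∈ W` are adjacent iff they are non-adjacent in `G`. -/
def bipComplOn {V : Type u} (G : SimpleGraph V) (U W : Set V) : SimpleGraph V where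
  Adj x y := ((x ∈ U ∧ y ∈ W) ∨ (x ∈ W ∧ y ∈ U)) ∧ x ≠ y ∧ ¬ G.Adj x y
  symm := by
    constructor
    rintro x y ⟨h1, h2, h3⟩
    exact ⟨by tauto, h2.symm, fun h => h3 h.symm⟩
  loopless := by constructor; rintro x ⟨_, h, _⟩; exact h rfl

/-- The permutation of `Fin 7` turning an induced `P₇` in the bipartite complement
into an induced `P₇` in `G`. -/
def sig7 : Fin 7 → Fin 7 := fun a => match a.val with
  | 0 => 2 | 1 => 5 | 2 => 0 | 3 => 3 | 4 => 6 | 5 => 1 | _ => 4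

lemma sig7_injective : Function.Injective sig7 := by decide

lemma bipComplOn_comm {V : Type u} (G : SimpleGraph V) (U W : Set V) :
    bipComplOn G U W = bipComplOn G W U := by
  ext x y
  constructor <;> (rintro ⟨h1, h2, h3⟩; exact ⟨by tauto, h2, h3⟩)

lemma isBipartition_symm {V : Type u} {G : SimpleGraph V} {U W : Set V}
    (h : IsBipartition G U W) : IsBipartition G W U :=
  ⟨by rw [Set.union_comm]; exact h.union_eq, h.disjoint.symm,
   fun x y hxy => (h.cross hxy).symm⟩

lemma aux7 {V : Type u} (G : SimpleGraph V) (U W : Set V)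
    (hbip : IsBipartition G U W) (f : Fin 7 ↪ V)
    (hf : ∀ a b : Fin 7, (bipComplOn G U W).Adj (f a) (f b) ↔ (SimpleGraph.pathGraph 7).Adj a b)
    (h0 : f 0 ∈ U) : HasInducedCopy (SimpleGraph.pathGraph 7) G := by
  have hd : ∀ v : V, v ∈ U → v ∈ W → False := fun v h1 h2 =>
    Set.disjoint_left.mp hbip.disjoint h1 h2
  -- consecutive adjacencies in the complement
  have hpath : ∀ a b : Fin 7, (a.val + 1 = b.val ∨ b.val + 1 = a.val) →
      (bipComplOn G U W).Adj (f a) (f b) := fun a b h =>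
    (hf a b).mpr (SimpleGraph.pathGraph_adj.mpr h)
  have c01 := hpath 0 1 (by decide)
  have c12 := hpath 1 2 (by decide)
  have c23 := hpath 2 3 (by decide)
  have c34 := hpath 3 4 (by decide)
  have c45 := hpath 4 5 (by decide)
  have c56 := hpath 5 6 (by decide)
  -- memberships alternate
  have stepW : ∀ x y : V, x ∈ U → ((x ∈ U ∧ y ∈ W) ∨ (x ∈ W ∧ y ∈ U)) → y ∈ W := by
    rintro x y hx (⟨_, h⟩ | ⟨h, _⟩)
    · exact h
    · exact (hd x hx h).elim
  have stepU : ∀ x y : V, x ∈ W → ((x ∈ U ∧ y ∈ W) ∨ (x ∈ W ∧ y ∈ U)) → y ∈ U := by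
    rintro x y hx (⟨h, _⟩ | ⟨_, h⟩)
    · exact (hd x h hx).elim
    · exact h
  have m1 : f 1 ∈ W := stepW _ _ h0 c01.1
  have m2 : f 2 ∈ U := stepU _ _ m1 c12.1
  have m3 : f 3 ∈ W := stepW _ _ m2 c23.1
  have m4 : f 4 ∈ U := stepU _ _ m3 c34.1
  have m5 : f 5 ∈ W := stepW _ _ m4 c45.1
  have m6 : f 6 ∈ U := stepU _ _ m5 c56.1
  -- vertices in the same part are never adjacent in G
  have sameU : ∀ x y : V, x ∈ U → y ∈ U → ¬ G.Adj x y := by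
    intro x y hx hy h
    rcases hbip.cross h with ⟨_, h2⟩ | ⟨h2, _⟩
    · exact hd y hy h2
    · exact hd x hx h2
  have sameW : ∀ x y : V, x ∈ W → y ∈ W → ¬ G.Adj x y := by
    intro x y hx hy h
    rcases hbip.cross h with ⟨h2, _⟩ | ⟨_, h2⟩
    · exact hd x h2 hx
    · exact hd y h2 hy
  -- opposite parts, not adjacent in the complement ⇒ adjacent in G
  have pos : ∀ a b : Fin 7, f a ∈ U → f b ∈ W →
      ¬ (a.val + 1 = b.val ∨ b.val + 1 = a.val) → G.Adj (f a) (f b) := by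
    intro a b ha hb hp
    by_contra h
    have hne : f a ≠ f b := fun e => hd (f a) ha (e ▸ hb)
    exact hp (SimpleGraph.pathGraph_adj.mp ((hf a b).mp ⟨Or.inl ⟨ha, hb⟩, hne, h⟩))
  -- edges of the new path
  have a03 : G.Adj (f 0) (f 3) := pos 0 3 h0 m3 (by decide)
  have a05 : G.Adj (f 0) (f 5) := pos 0 5 h0 m5 (by decide)
  have a25 : G.Adj (f 2) (f 5) := pos 2 5 m2 m5 (by decide)
  have a41 : G.Adj (f 4) (f 1) := pos 4 1 m4 m1 (by decide)
  have a61 : G.Adj (f 6) (f 1) := pos 6 1 m6 m1 (by decide)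
  have a63 : G.Adj (f 6) (f 3) := pos 6 3 m6 m3 (by decide)
  -- non-edges
  have n01 := c01.2.2
  have n12 := c12.2.2
  have n23 := c23.2.2
  have n34 := c34.2.2
  have n45 := c45.2.2
  have n56 := c56.2.2
  have n02 := sameU _ _ h0 m2
  have n04 := sameU _ _ h0 m4
  have n06 := sameU _ _ h0 m6
  have n24 := sameU _ _ m2 m4
  have n26 := sameU _ _ m2 m6
  have n46 := sameU _ _ m4 m6
  have n13 := sameW _ _ m1 m3
  have n15 := sameW _ _ m1 m5
  have n35 := sameW _ _ m3 m5
  have symmA : ∀ x y : V, G.Adj x y → G.Adj y x := fun _ _ h => h.symm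
  have symmN : ∀ x y : V, ¬ G.Adj x y → ¬ G.Adj y x := fun _ _ h a => h a.symm
  refine ⟨⟨fun a => f (sig7 a), fun a b h => sig7_injective (f.injective h)⟩, ?_⟩
  intro a b
  fin_cases a <;> fin_cases b <;>
    simp only [sig7, Function.Embedding.coeFn_mk, SimpleGraph.pathGraph_adj] <;>
    norm_num <;>
    first
      | assumption
      | exact symmA _ _ (by assumption)
      | exact symmN _ _ (by assumption)

/-- If `G = (U, W, E)` is a `P₇`-free bipartite graph, then its bipartite
complement is also a `P₇`-free bipartite graph. -/
theorem bipCompl_P7_free {V : Type u} (G : SimpleGraph V) (U W : Set V)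
    (hbip : IsBipartition G U W) (hP7 : PathFree 7 G) :
    IsBipartition (bipComplOn G U W) U W ∧ PathFree 7 (bipComplOn G U W) := by
  constructor
  · exact ⟨hbip.union_eq, hbip.disjoint, fun x y h => h.1⟩
  · rintro ⟨f, hf⟩
    apply hP7
    have h0 : f 0 ∈ U ∨ f 0 ∈ W := by
      have : f 0 ∈ U ∪ W := by rw [hbip.union_eq]; trivial
      exact this
    rcases h0 with h0 | h0
    · exact aux7 G U W hbip f hf h0
    · refine aux7 G W U (isBipartition_symm hbip) f ?_ h0
      intro a b
      rw [← bipComplOn_comm]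
      exact hf a b
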